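/- Let A, B, C, D be sets with B and C finite, and let T = (Q, δ), T' = (Q', δ'), T'' = (Q'', δ'') be Turing automata of sorts A ⊕ B, B ⊕ C, and C ⊕ D respectively. Then the derived composition is associative up to the canonical state bijection: (T ∘ T') ∘ T'' and T ∘ (T' ∘ T'') are Turing automata of sort A ⊕ D with state sets (Q × Q') × Q'' and Q × (Q' × Q'') respectively, and for all states and all interfaces x, y of (A ⊕ D) ⊕ {*}, ((((q,q'),q''),x),((((r,r'),r'')),y)) is a transition of (T ∘ T') ∘ T'' if and only if (((q,(q',q'')),x),((r,(r',r'')),y)) is a transition of T ∘ (T' ∘ T''). -/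

import Mathlib

/-- The transition relation of a Turing automaton of sort `X`: a relation
`δ ⊆ (Q × X_*)²`, where `X_* = X ⊕ {*}` is modeled as `Option X`, with `none` the anchor. -/
def TRel (Q X : Type*) : Type _ := (Q × Option X) → (Q × Option X) → Prop

/-- Relational composition (product of the semiring of binary relations on `Q`). -/
def rcomp {Q : Type*} (r s : Q → Q → Prop) : Q → Q → Prop := fun a c => ∃ b, r a b ∧ s b c

/-- Union of relations (sum of the semiring of binary relations on `Q`). -/
def runion {Q : Type*} (r s : Q → Q → Prop) : Q → Q → Prop := fun a b => r a b ∨ s a b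

/-- 2×2 matrices of binary relations on `Q`. -/
def Mat2 (Q : Type*) : Type _ := Fin 2 → Fin 2 → (Q → Q → Prop)

/-- The transposition of indices used to interchange the two rows of a matrix. -/
def swap2 : Fin 2 → Fin 2 := fun i => if i = 0 then 1 else 0

/-- Alternating matrix product `M ⊙ N := M · (σN)`, where `σN` interchanges the rows of `N`. -/
def altMul {Q : Type*} (M N : Mat2 Q) : Mat2 Q :=
  fun i j => runion (rcomp (M i 0) (N (swap2 0) j)) (rcomp (M i 1) (N (swap2 1) j))

/-- `U⁰ := σI₂`: identity relations off the diagonal, empty relations on the diagonal. -/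
def altOne {Q : Type*} : Mat2 Q := fun i j => if i = j then (fun _ _ => False) else Eq

/-- Alternating matrix powers: `U⁰ = σI₂`, `U^(n+1) = Uⁿ ⊙ U`. -/
def altPow {Q : Type*} (U : Mat2 Q) : ℕ → Mat2 Q
  | 0 => altOne
  | n + 1 => altMul (altPow U n) U

/-- Alternating product of a row vector with a matrix: `u ⊙ M := u · (σM)`. -/
def altRowMul {Q : Type*} (u : Fin 2 → Q → Q → Prop) (M : Mat2 Q) : Fin 2 → Q → Q → Prop :=
  fun j => runion (rcomp (u 0) (M (swap2 0) j)) (rcomp (u 1) (M (swap2 1) j))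

/-- Alternating product of a row vector with a column vector: `u ⊙ v := u · (σv)`. -/
def altRowCol {Q : Type*} (u v : Fin 2 → Q → Q → Prop) : Q → Q → Prop :=
  runion (rcomp (u 0) (v (swap2 0))) (rcomp (u 1) (v (swap2 1)))

/-- A family `λ_{x,y}` of binary relations on `Q` indexed by pairs of interfaces. -/
def LamFamily (Q X : Type*) : Type _ := Option X → Option X → (Q → Q → Prop)

/-- The base case of the Kleene elimination: `λ^∅_{x,y} = {(q,r) | ((q,x),(r,y)) ∈ δ}`. -/
def lamInit {Q A B : Type*} (δ : TRel Q (A ⊕ A ⊕ B)) : LamFamily Q (A ⊕ A ⊕ B) :=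
  fun x y q r => δ (q, x) (r, y)

/-- One Kleene elimination step at `z ∈ A`:
`λ^(C∪{z})_{x,y} := λ^C_{x,y} ∪ ⋃_{n≥0} u ⊙ Uⁿ ⊙ v` with
`u = (λ^C_{x,⟨z,1⟩}, λ^C_{x,⟨z,2⟩})`, `v = (λ^C_{⟨z,1⟩,y}; λ^C_{⟨z,2⟩,y})` and
`U = (λ^C_{⟨z,i⟩,⟨z,j⟩})_{i,j}`. -/
def elimStep {Q A B : Type*} (lam : LamFamily Q (A ⊕ A ⊕ B)) (z : A) :
    LamFamily Q (A ⊕ A ⊕ B) :=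
  fun x y =>
    let p : Fin 2 → Option (A ⊕ A ⊕ B) := ![some (Sum.inl z), some (Sum.inr (Sum.inl z))]
    let u : Fin 2 → Q → Q → Prop := fun i => lam x (p i)
    let U : Mat2 Q := fun i j => lam (p i) (p j)
    let v : Fin 2 → Q → Q → Prop := fun i => lam (p i) y
    runion (lam x y) (fun q r => ∃ n, altRowCol (altRowMul u (altPow U n)) v q r)

/-- Kleene elimination along a list of elements of `A`. -/
def lamList {Q A B : Type*} (δ : TRel Q (A ⊕ A ⊕ B)) : List A → LamFamily Q (A ⊕ A ⊕ B)
  | [] => lamInit δ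
  | z :: L => elimStep (lamList δ L) z

/-- The trace `κ_A T` of a Turing automaton of sort `A ⊕ A ⊕ B` (`A` finite): its
transitions are `((q,b),(r,b'))` iff `(q,r) ∈ λ^A_{b,b'}`. -/
def kappa {Q A B : Type*} [Fintype A] (δ : TRel Q (A ⊕ A ⊕ B)) : TRel Q B :=
  fun a b =>
    lamList δ Finset.univ.toList (a.2.map (fun x => Sum.inr (Sum.inr x)))
      (b.2.map (fun x => Sum.inr (Sum.inr x))) a.1 b.1

/-- The relabeling `T · ρ` of a Turing automaton along a bijection `ρ : X ≃ Y`: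
`((q, ρ_* x),(r, ρ_* y))` is a transition iff `((q,x),(r,y))` is, where `ρ_*(*) = *`. -/
def relabel {Q X Y : Type*} (ρ : X ≃ Y) (δ : TRel Q X) : TRel Q Y :=
  fun a b => δ (a.1, a.2.map ρ.symm) (b.1, b.2.map ρ.symm)

/-- The sum `T ⊕ T'` of Turing automata of sorts `X` and `Y`: states `Q × Q'`, and a
transition happens in one component while the other state stays put; anchors identified. -/
def autSum {Q Q' X Y : Type*} (δ : TRel Q X) (δ' : TRel Q' Y) : TRel (Q × Q') (X ⊕ Y) :=
  fun a b =>
    (∃ u v : Option X, a.2 = u.map Sum.inl ∧ b.2 = v.map Sum.inl ∧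
      a.1.2 = b.1.2 ∧ δ (a.1.1, u) (b.1.1, v)) ∨
    (∃ u v : Option Y, a.2 = u.map Sum.inr ∧ b.2 = v.map Sum.inr ∧
      a.1.1 = b.1.1 ∧ δ' (a.1.2, u) (b.1.2, v))

/-- The identity Turing automaton `1_A` of sort `A ⊕ A`: a single state, with transitions
from `⟨a,1⟩` to `⟨a,2⟩` and back for every `a ∈ A`. -/
def idAut (A : Type*) : TRel PUnit (A ⊕ A) :=
  fun a b =>
    (∃ x : A, a.2 = some (Sum.inl x) ∧ b.2 = some (Sum.inr x)) ∨
    (∃ x : A, a.2 = some (Sum.inr x) ∧ b.2 = some (Sum.inl x))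

/-- The permutation `c_{A,B⊕B} ⊗ 1_C` rearranging `(A ⊕ B) ⊕ (B ⊕ C)` into
`B ⊕ B ⊕ (A ⊕ C)`, used to define the derived composition. -/
def compPerm (A B C : Type*) : (A ⊕ B) ⊕ (B ⊕ C) ≃ B ⊕ B ⊕ (A ⊕ C) where
  toFun x := match x with
    | .inl (.inl a) => .inr (.inr (.inl a))
    | .inl (.inr b) => .inl b
    | .inr (.inl b) => .inr (.inl b)
    | .inr (.inr c) => .inr (.inr (.inr c))
  invFun y := match y with
    | .inl b => .inl (.inr b)
    | .inr (.inl b) => .inr (.inl b)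
    | .inr (.inr (.inl a)) => .inl (.inl a)
    | .inr (.inr (.inr c)) => .inr (.inr c)
  left_inv x := by rcases x with (a | b) | (b | c) <;> rfl
  right_inv y := by rcases y with b | (b | (a | c)) <;> rfl

/-- The derived composition `T ∘ T' := κ_B((T ⊕ T') · (c_{A,B⊕B} ⊗ 1_C))` of Turing
automata of sorts `A ⊕ B` and `B ⊕ C` (`B` finite). -/
def compAut {Q Q' A B C : Type*} [Fintype B]
    (δ : TRel Q (A ⊕ B)) (δ' : TRel Q' (B ⊕ C)) : TRel (Q × Q') (A ⊕ C) :=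
  kappa (relabel (compPerm A B C) (autSum δ δ'))

section PathChar

variable {Q X Y : Type*}

lemma swap2_zero : swap2 0 = 1 := rfl
lemma swap2_one : swap2 1 = 0 := rfl
lemma swap2_swap2 (j : Fin 2) : swap2 (swap2 j) = j := by fin_cases j <;> rfl

/-- The two ports of an eliminated letter `z`. -/
def pt {X Y : Type*} (z : X) : Fin 2 → Option (X ⊕ X ⊕ Y) :=
  ![some (Sum.inl z), some (Sum.inr (Sum.inl z))]

lemma altRowMul_one (u : Fin 2 → Q → Q → Prop) : altRowMul u altOne = u := by
  funext j q r
  rw [eq_iff_iff]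
  fin_cases j <;> simp [altRowMul, altOne, runion, rcomp, swap2]

lemma altRowMul_assoc (u : Fin 2 → Q → Q → Prop) (M N : Mat2 Q) :
    altRowMul u (altMul M N) = altRowMul (altRowMul u M) N := by
  funext j q r
  rw [eq_iff_iff]
  simp only [altRowMul, altMul, runion, rcomp]
  constructor
  · rintro (⟨b, hb, (⟨c, h1, h2⟩ | ⟨c, h1, h2⟩)⟩ | ⟨b, hb, (⟨c, h1, h2⟩ | ⟨c, h1, h2⟩)⟩)
    · exact Or.inl ⟨c, Or.inl ⟨b, hb, h1⟩, h2⟩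
    · exact Or.inr ⟨c, Or.inl ⟨b, hb, h1⟩, h2⟩
    · exact Or.inl ⟨c, Or.inr ⟨b, hb, h1⟩, h2⟩
    · exact Or.inr ⟨c, Or.inr ⟨b, hb, h1⟩, h2⟩
  · rintro (⟨c, (⟨b, hb, h1⟩ | ⟨b, hb, h1⟩), h2⟩ | ⟨c, (⟨b, hb, h1⟩ | ⟨b, hb, h1⟩), h2⟩)
    · exact Or.inl ⟨b, hb, Or.inl ⟨c, h1, h2⟩⟩
    · exact Or.inr ⟨b, hb, Or.inl ⟨c, h1, h2⟩⟩
    · exact Or.inl ⟨b, hb, Or.inr ⟨c, h1, h2⟩⟩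
    · exact Or.inr ⟨b, hb, Or.inr ⟨c, h1, h2⟩⟩

lemma altOne_mul (U : Mat2 Q) : altMul altOne U = U := by
  funext i j q r
  rw [eq_iff_iff]
  fin_cases i <;> simp [altMul, altOne, runion, rcomp, swap2]

lemma altMul_one (U : Mat2 Q) : altMul U altOne = U := by
  funext i j q r
  rw [eq_iff_iff]
  fin_cases j <;> simp [altMul, altOne, runion, rcomp, swap2]

lemma altMul_assoc (L M N : Mat2 Q) : altMul (altMul L M) N = altMul L (altMul M N) := by
  funext i j
  have h := congrFun (altRowMul_assoc (fun k => L i k) M N) j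
  dsimp [altRowMul, altMul] at h ⊢
  exact h.symm

lemma altPow_succ_left (U : Mat2 Q) (n : ℕ) :
    altPow U (n + 1) = altMul U (altPow U n) := by
  induction n with
  | zero => show altMul altOne U = altMul U altOne; rw [altOne_mul, altMul_one]
  | succ n ih =>
      show altMul (altPow U (n+1)) U = altMul U (altPow U (n+1))
      rw [ih, altMul_assoc, ← ih]
      rfl

/-- Paths through the two ports of a single letter, with crossing wiring. -/
def thr (lam : LamFamily Q X) (p : Fin 2 → Option X) :
    List (Fin 2) → Option X → Option X → Q → Q → Prop
  | [], x, y, q, r => lam x y q r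
  | j :: js, x, y, q, r => ∃ s, lam x (p j) q s ∧ thr lam p js (p (swap2 j)) y s r

lemma row_pow_iff (lam : LamFamily Q X) (p : Fin 2 → Option X) (y : Option X) :
    ∀ (n : ℕ) (u : Fin 2 → Q → Q → Prop) (q r : Q),
      altRowCol (altRowMul u (altPow (fun i j => lam (p i) (p j)) n))
        (fun i => lam (p i) y) q r ↔
      ∃ (j : Fin 2) (js : List (Fin 2)), js.length = n ∧
        ∃ s, u j q s ∧ thr lam p js (p (swap2 j)) y s r := by
  intro n
  induction n with
  | zero =>
      intro u q r
      rw [show altPow (fun i j => lam (p i) (p j)) 0 = altOne from rfl, altRowMul_one]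
      constructor
      · rintro (⟨s, h1, h2⟩ | ⟨s, h1, h2⟩)
        · exact ⟨0, [], rfl, s, h1, h2⟩
        · exact ⟨1, [], rfl, s, h1, h2⟩
      · rintro ⟨j, js, hlen, s, h1, h2⟩
        rw [List.length_eq_zero_iff] at hlen; subst hlen
        fin_cases j
        · exact Or.inl ⟨s, h1, h2⟩
        · exact Or.inr ⟨s, h1, h2⟩
  | succ n ih =>
      intro u q r
      rw [altPow_succ_left (fun i j => lam (p i) (p j)) n,
        altRowMul_assoc u (fun i j => lam (p i) (p j)) (altPow (fun i j => lam (p i) (p j)) n)]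
      rw [ih]
      constructor
      · rintro ⟨j, js, hlen, s, hu, hthr⟩
        rcases hu with ⟨t, ht, hU⟩ | ⟨t, ht, hU⟩
        · exact ⟨0, j :: js, by simp [hlen], t, ht, ⟨s, hU, hthr⟩⟩
        · exact ⟨1, j :: js, by simp [hlen], t, ht, ⟨s, hU, hthr⟩⟩
      · rintro ⟨i, js, hlen, t, hu, hthr⟩
        rcases js with _ | ⟨j, js⟩
        · simp at hlen
        · obtain ⟨s, hU, hthr'⟩ := hthr
          refine ⟨j, js, by simpa using hlen, s, ?_, hthr'⟩
          fin_cases i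
          · exact Or.inl ⟨t, hu, hU⟩
          · exact Or.inr ⟨t, hu, hU⟩

lemma elimStep_iff {A B : Type*} (lam : LamFamily Q (A ⊕ A ⊕ B)) (z : A)
    (x y : Option (A ⊕ A ⊕ B)) (q r : Q) :
    elimStep lam z x y q r ↔ ∃ js, thr lam (pt z) js x y q r := by
  show lam x y q r ∨ (∃ n, altRowCol (altRowMul (fun i => lam x (pt z i))
      (altPow (fun i j => lam (pt z i) (pt z j)) n)) (fun i => lam (pt z i) y) q r) ↔ _
  constructor
  · rintro (h | ⟨n, h⟩)
    · exact ⟨[], h⟩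
    · rw [row_pow_iff lam (pt z) y n] at h
      obtain ⟨j, js, _, s, h1, h2⟩ := h
      exact ⟨j :: js, s, h1, h2⟩
  · rintro ⟨js, h⟩
    rcases js with _ | ⟨j, js⟩
    · exact Or.inl h
    · obtain ⟨s, h1, h2⟩ := h
      exact Or.inr ⟨js.length, (row_pow_iff lam (pt z) y js.length _ q r).mpr
        ⟨j, js, rfl, s, h1, h2⟩⟩

end PathChar

section ChainChar

variable {Q X Y : Type*}

/-- A chain of `δ`-edges wired through ports of eliminated letters. -/
def chainR (δ : TRel Q (X ⊕ X ⊕ Y)) :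
    List (X × Fin 2) → Option (X ⊕ X ⊕ Y) → Option (X ⊕ X ⊕ Y) → Q → Q → Prop
  | [], x, y, q, r => δ (q, x) (r, y)
  | (z, j) :: ws, x, y, q, r =>
      ∃ s, δ (q, x) (s, pt z j) ∧ chainR δ ws (pt z (swap2 j)) y s r

/-- Chains whose eliminated letters all lie in `L`. -/
def chainRel (δ : TRel Q (X ⊕ X ⊕ Y)) (L : List X) : LamFamily Q (X ⊕ X ⊕ Y) :=
  fun x y q r => ∃ ws, (∀ w ∈ ws, w.1 ∈ L) ∧ chainR δ ws x y q r

lemma thr_congr {lam lam' : LamFamily Q X} (p : Fin 2 → Option X)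
    (h : ∀ x y q r, lam x y q r ↔ lam' x y q r) :
    ∀ (js : List (Fin 2)) x y q r, thr lam p js x y q r ↔ thr lam' p js x y q r := by
  intro js
  induction js with
  | nil => intro x y q r; exact h x y q r
  | cons j js ih =>
      intro x y q r
      constructor
      · rintro ⟨s, h1, h2⟩; exact ⟨s, (h _ _ _ _).mp h1, (ih _ _ _ _).mp h2⟩
      · rintro ⟨s, h1, h2⟩; exact ⟨s, (h _ _ _ _).mpr h1, (ih _ _ _ _).mpr h2⟩

lemma chainR_append (δ : TRel Q (X ⊕ X ⊕ Y)) (z : X) (j : Fin 2) :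
    ∀ (l₁ l₂ : List (X × Fin 2)) (x y : Option (X ⊕ X ⊕ Y)) (q s r : Q),
      chainR δ l₁ x (pt z j) q s → chainR δ l₂ (pt z (swap2 j)) y s r →
      chainR δ (l₁ ++ (z, j) :: l₂) x y q r := by
  intro l₁
  induction l₁ with
  | nil => intro l₂ x y q s r h1 h2; exact ⟨s, h1, h2⟩
  | cons w l₁ ih =>
      obtain ⟨z', j'⟩ := w
      rintro l₂ x y q s r ⟨t, h1, h1'⟩ h2
      exact ⟨t, h1, ih l₂ _ y t s r h1' h2⟩

lemma chainR_split (δ : TRel Q (X ⊕ X ⊕ Y)) (z : X) (j : Fin 2) :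
    ∀ (l₁ l₂ : List (X × Fin 2)) (x y : Option (X ⊕ X ⊕ Y)) (q r : Q),
      chainR δ (l₁ ++ (z, j) :: l₂) x y q r →
      ∃ s, chainR δ l₁ x (pt z j) q s ∧ chainR δ l₂ (pt z (swap2 j)) y s r := by
  intro l₁
  induction l₁ with
  | nil => rintro l₂ x y q r ⟨s, h1, h2⟩; exact ⟨s, h1, h2⟩
  | cons w l₁ ih =>
      obtain ⟨z', j'⟩ := w
      rintro l₂ x y q r ⟨t, h1, h2⟩
      obtain ⟨s, h3, h4⟩ := ih l₂ _ y t r h2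
      exact ⟨s, ⟨t, h1, h3⟩, h4⟩

lemma thr_prepend (lam : LamFamily Q X) (p : Fin 2 → Option X) (e : Q → Q → Prop)
    (x x' : Option X) (H : ∀ y' q s t, e q s → lam x' y' s t → lam x y' q t) :
    ∀ (js : List (Fin 2)) (y : Option X) (q s r : Q),
      e q s → thr lam p js x' y s r → thr lam p js x y q r := by
  intro js
  induction js with
  | nil => intro y q s r he h; exact H y q s r he h
  | cons j js _ =>
      rintro y q s r he ⟨t, h1, h2⟩
      exact ⟨t, H _ _ _ _ he h1, h2⟩

lemma thr_to_chainRel (δ : TRel Q (X ⊕ X ⊕ Y)) (L : List X) (z : X) :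
    ∀ (js : List (Fin 2)) (x y : Option (X ⊕ X ⊕ Y)) (q r : Q),
      thr (chainRel δ L) (pt z) js x y q r → chainRel δ (z :: L) x y q r := by
  intro js
  induction js with
  | nil =>
      rintro x y q r ⟨ws, hmem, hch⟩
      exact ⟨ws, fun w hw => List.mem_cons_of_mem _ (hmem w hw), hch⟩
  | cons j js ih =>
      rintro x y q r ⟨s, ⟨ws₁, hm₁, hc₁⟩, htail⟩
      obtain ⟨ws₂, hm₂, hc₂⟩ := ih _ y s r htail
      refine ⟨ws₁ ++ (z, j) :: ws₂, ?_, chainR_append δ z j ws₁ ws₂ x y q s r hc₁ hc₂⟩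
      intro w hw
      rcases List.mem_append.mp hw with h | h
      · exact List.mem_cons_of_mem _ (hm₁ w h)
      · rcases List.mem_cons.mp h with h | h
        · subst h; exact List.mem_cons_self
        · exact hm₂ w h

lemma chain_to_thr (δ : TRel Q (X ⊕ X ⊕ Y)) (L : List X) (z : X) :
    ∀ (ws : List (X × Fin 2)) (x y : Option (X ⊕ X ⊕ Y)) (q r : Q),
      (∀ w ∈ ws, w.1 ∈ z :: L) → chainR δ ws x y q r →
      ∃ js, thr (chainRel δ L) (pt z) js x y q r := by
  intro ws
  induction ws with
  | nil =>
      intro x y q r _ h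
      exact ⟨[], [], by simp, h⟩
  | cons w ws ih =>
      obtain ⟨w₀, j⟩ := w
      rintro x y q r hmem ⟨s, hedge, htail⟩
      obtain ⟨js, hthr⟩ := ih _ y s r (fun w hw => hmem w (List.mem_cons_of_mem _ hw)) htail
      rcases List.mem_cons.mp (hmem (w₀, j) (List.mem_cons_self)) with h | h
      · obtain rfl : w₀ = z := by simpa using h
        exact ⟨j :: js, s, ⟨[], by simp, hedge⟩, hthr⟩
      · refine ⟨js, ?_⟩
        refine thr_prepend (chainRel δ L) (pt z) (fun q s => δ (q, x) (s, pt w₀ j))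
          x (pt w₀ (swap2 j)) ?_ js y q s r hedge hthr
        rintro y' q₁ s₁ t₁ he ⟨ws', hm', hc'⟩
        exact ⟨(w₀, j) :: ws', by
          intro w hw
          rcases List.mem_cons.mp hw with hw | hw
          · subst hw; exact h
          · exact hm' w hw, ⟨s₁, he, hc'⟩⟩

lemma lamList_iff (δ : TRel Q (X ⊕ X ⊕ Y)) :
    ∀ (L : List X) (x y : Option (X ⊕ X ⊕ Y)) (q r : Q),
      lamList δ L x y q r ↔ chainRel δ L x y q r := by
  intro L
  induction L with
  | nil =>
      intro x y q r
      constructor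
      · intro h; exact ⟨[], by simp, h⟩
      · rintro ⟨ws, hmem, hch⟩
        rcases ws with _ | ⟨⟨w₀, j⟩, ws⟩
        · exact hch
        · exact absurd (hmem (w₀, j) (List.mem_cons_self)) (by simp)
  | cons z L ih =>
      intro x y q r
      rw [show lamList δ (z :: L) = elimStep (lamList δ L) z from rfl, elimStep_iff]
      constructor
      · rintro ⟨js, h⟩
        exact thr_to_chainRel δ L z js x y q r
          ((thr_congr (pt z) ih js x y q r).mp h)
      · rintro ⟨ws, hmem, hch⟩
        obtain ⟨js, h⟩ := chain_to_thr δ L z ws x y q r hmem hch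
        exact ⟨js, (thr_congr (pt z) ih js x y q r).mpr h⟩

lemma kappa_iff {A : Type*} [Fintype A] (δ : TRel Q (A ⊕ A ⊕ Y)) (q r : Q)
    (x y : Option Y) :
    kappa δ (q, x) (r, y) ↔
      ∃ ws, chainR δ ws (x.map (fun b => Sum.inr (Sum.inr b)))
        (y.map (fun b => Sum.inr (Sum.inr b))) q r := by
  show lamList δ _ _ _ _ _ ↔ _
  rw [lamList_iff]
  constructor
  · rintro ⟨ws, _, h⟩; exact ⟨ws, h⟩
  · rintro ⟨ws, h⟩
    exact ⟨ws, fun w _ => Finset.mem_toList.mpr (Finset.mem_univ _), h⟩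

end ChainChar

section Glue

/-- Embedding of the interfaces of `T` (sort `A ⊕ B`) into the global sort. -/
def eT (A B C D : Type*) : A ⊕ B → (B ⊕ C) ⊕ (B ⊕ C) ⊕ (A ⊕ D)
  | .inl a => .inr (.inr (.inl a))
  | .inr b => .inl (.inl b)

/-- Embedding of the interfaces of `T'` (sort `B ⊕ C`) into the global sort. -/
def eT' (A B C D : Type*) : B ⊕ C → (B ⊕ C) ⊕ (B ⊕ C) ⊕ (A ⊕ D)
  | .inl b => .inr (.inl (.inl b))
  | .inr c => .inl (.inr c)

/-- Embedding of the interfaces of `T''` (sort `C ⊕ D`) into the global sort. -/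
def eT'' (A B C D : Type*) : C ⊕ D → (B ⊕ C) ⊕ (B ⊕ C) ⊕ (A ⊕ D)
  | .inl c => .inr (.inl (.inr c))
  | .inr d => .inr (.inr (.inr d))

variable {Q Q' Q'' A B C D : Type*}

/-- The sum of the three automata, relabeled into the global sort
`(B ⊕ C) ⊕ (B ⊕ C) ⊕ (A ⊕ D)` whose two `B ⊕ C` copies are the glued ports. -/
def gdelta (δ : TRel Q (A ⊕ B)) (δ' : TRel Q' (B ⊕ C)) (δ'' : TRel Q'' (C ⊕ D)) :
    TRel (Q × Q' × Q'') ((B ⊕ C) ⊕ (B ⊕ C) ⊕ (A ⊕ D)) :=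
  fun a b =>
    (∃ u v, a.2 = u.map (eT A B C D) ∧ b.2 = v.map (eT A B C D) ∧
        a.1.2 = b.1.2 ∧ δ (a.1.1, u) (b.1.1, v)) ∨
    (∃ u v, a.2 = u.map (eT' A B C D) ∧ b.2 = v.map (eT' A B C D) ∧
        a.1.1 = b.1.1 ∧ a.1.2.2 = b.1.2.2 ∧ δ' (a.1.2.1, u) (b.1.2.1, v)) ∨
    (∃ u v, a.2 = u.map (eT'' A B C D) ∧ b.2 = v.map (eT'' A B C D) ∧
        a.1.1 = b.1.1 ∧ a.1.2.1 = b.1.2.1 ∧ δ'' (a.1.2.2, u) (b.1.2.2, v))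

/-- Embedding of the sort of `(T ⊕ T') · ρ` into the global sort. -/
def j2L (A B C D : Type*) : B ⊕ B ⊕ (A ⊕ C) → (B ⊕ C) ⊕ (B ⊕ C) ⊕ (A ⊕ D)
  | .inl b => .inl (.inl b)
  | .inr (.inl b) => .inr (.inl (.inl b))
  | .inr (.inr (.inl a)) => .inr (.inr (.inl a))
  | .inr (.inr (.inr c)) => .inl (.inr c)

/-- Embedding of the sort of `(T ∘ T' ⊕ T'') · ρ` into the global sort. -/
def j1L (A B C D : Type*) : C ⊕ C ⊕ (A ⊕ D) → (B ⊕ C) ⊕ (B ⊕ C) ⊕ (A ⊕ D)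
  | .inl c => .inl (.inr c)
  | .inr (.inl c) => .inr (.inl (.inr c))
  | .inr (.inr ad) => .inr (.inr ad)

lemma map_trans {α β γ σ : Type*} (e : α ≃ γ) {x : Option γ} {u : Option β}
    (g : β → α) (hx : Option.map e.symm x = Option.map g u) (f : γ → σ) (k : β → σ)
    (hfk : ∀ w, f (e (g w)) = k w) : Option.map f x = Option.map k u := by
  have hx' : x = Option.map (fun w => e (g w)) u := by
    cases x <;> cases u <;> simp_all [Equiv.symm_apply_eq]
  subst hx'
  cases u with
  | none => rfl
  | some w => simp [hfk w]

lemma ptB_eq (b : B) (j : Fin 2) :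
    (pt (X := B ⊕ C) (Y := A ⊕ D) (Sum.inl b) j) =
      Option.map (j2L A B C D) (pt (X := B) (Y := A ⊕ C) b j) := by
  fin_cases j <;> rfl

lemma ptC_eq_L (c : C) (j : Fin 2) :
    (pt (X := B ⊕ C) (Y := A ⊕ D) (Sum.inr c) j) =
      Option.map (j1L A B C D) (pt (X := C) (Y := A ⊕ D) c j) := by
  fin_cases j <;> rfl

variable (δ : TRel Q (A ⊕ B)) (δ' : TRel Q' (B ⊕ C)) (δ'' : TRel Q'' (C ⊕ D))

lemma E1L (x y : Option (B ⊕ B ⊕ (A ⊕ C))) (p p' : Q × Q') (t : Q'')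
    (h : relabel (compPerm A B C) (autSum δ δ') (p, x) (p', y)) :
    gdelta δ δ' δ'' ((p.1, p.2, t), x.map (j2L A B C D))
      ((p'.1, p'.2, t), y.map (j2L A B C D)) := by
  rcases h with ⟨u, v, hx, hy, hst, hd⟩ | ⟨u, v, hx, hy, hst, hd⟩
  · exact Or.inl ⟨u, v,
      map_trans (compPerm A B C) Sum.inl hx _ _ (by rintro (a | b) <;> rfl),
      map_trans (compPerm A B C) Sum.inl hy _ _ (by rintro (a | b) <;> rfl),
      by rw [hst], hd⟩
  · exact Or.inr (Or.inl ⟨u, v,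
      map_trans (compPerm A B C) Sum.inr hx _ _ (by rintro (b | c) <;> rfl),
      map_trans (compPerm A B C) Sum.inr hy _ _ (by rintro (b | c) <;> rfl),
      by rw [hst], rfl, hd⟩)

lemma FlatL : ∀ (bs : List (B × Fin 2)) (x y : Option (B ⊕ B ⊕ (A ⊕ C)))
    (p p' : Q × Q') (t : Q''),
    chainR (relabel (compPerm A B C) (autSum δ δ')) bs x y p p' →
    chainR (gdelta δ δ' δ'') (bs.map (fun w => (Sum.inl w.1, w.2)))
      (x.map (j2L A B C D)) (y.map (j2L A B C D)) (p.1, p.2, t) (p'.1, p'.2, t) := by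
  intro bs
  induction bs with
  | nil => intro x y p p' t h; exact E1L δ δ' δ'' x y p p' t h
  | cons w bs ih =>
      obtain ⟨b, j⟩ := w
      rintro x y p p' t ⟨s, h1, h2⟩
      refine ⟨(s.1, s.2, t), ?_, ?_⟩
      · rw [ptB_eq]; exact E1L δ δ' δ'' x _ p s t h1
      · show chainR _ _ (pt (Sum.inl b) (swap2 j)) _ _ _
        rw [ptB_eq]; exact ih _ y s p' t h2

end Glue

section GlueL

variable {Q Q' Q'' A B C D : Type*}
variable (δ : TRel Q (A ⊕ B)) (δ' : TRel Q' (B ⊕ C)) (δ'' : TRel Q'' (C ⊕ D))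

lemma j2L_inj : Function.Injective (j2L A B C D) := by
  rintro (b | ⟨b | ⟨a | c⟩⟩) (b' | ⟨b' | ⟨a' | c'⟩⟩) h <;> simp_all [j2L]

lemma recov2L_T (x₂ : Option (B ⊕ B ⊕ (A ⊕ C))) (u : Option (A ⊕ B))
    (h : x₂.map (j2L A B C D) = u.map (eT A B C D)) :
    x₂.map (compPerm A B C).symm = u.map Sum.inl := by
  cases x₂ with
  | none => cases u with
    | none => rfl
    | some w => simp at h
  | some w₂ => cases u with
    | none => simp at h
    | some w =>
        simp only [Option.map_some] at h ⊢
        rcases w with a | b <;> rcases w₂ with b' | ⟨b' | ⟨a' | c'⟩⟩ <;>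
          simp_all [j2L, eT] <;> rfl

lemma recov2L_T' (x₂ : Option (B ⊕ B ⊕ (A ⊕ C))) (u : Option (B ⊕ C))
    (h : x₂.map (j2L A B C D) = u.map (eT' A B C D)) :
    x₂.map (compPerm A B C).symm = u.map Sum.inr := by
  cases x₂ with
  | none => cases u with
    | none => rfl
    | some w => simp at h
  | some w₂ => cases u with
    | none => simp at h
    | some w =>
        simp only [Option.map_some] at h ⊢
        rcases w with b | c <;> rcases w₂ with b' | ⟨b' | ⟨a' | c'⟩⟩ <;>
          simp_all [j2L, eT'] <;> rfl

/-- The preimage of `T`-interfaces in the sort of `(T ⊕ T') · ρ`. -/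
def preTL (A B C D : Type*) : A ⊕ B → B ⊕ B ⊕ (A ⊕ C)
  | .inl a => .inr (.inr (.inl a))
  | .inr b => .inl b

/-- The preimage of `T'`-interfaces in the sort of `(T ⊕ T') · ρ`. -/
def preT'L (A B C D : Type*) : B ⊕ C → B ⊕ B ⊕ (A ⊕ C)
  | .inl b => .inr (.inl b)
  | .inr c => .inr (.inr (.inr c))

lemma j2L_preTL (w : A ⊕ B) : j2L A B C D (preTL A B C D w) = eT A B C D w := by
  rcases w with a | b <;> rfl

lemma j2L_preT'L (w : B ⊕ C) : j2L A B C D (preT'L A B C D w) = eT' A B C D w := by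
  rcases w with b | c <;> rfl

lemma E2L (σ τ : Q × Q' × Q'') (gx gy : Option ((B ⊕ C) ⊕ (B ⊕ C) ⊕ (A ⊕ D)))
    (h : gdelta δ δ' δ'' (σ, gx) (τ, gy))
    (hB : (∃ b j, gx = pt (X := B ⊕ C) (Y := A ⊕ D) (Sum.inl b) j) ∨
          (∃ b j, gy = pt (X := B ⊕ C) (Y := A ⊕ D) (Sum.inl b) j))
    (x₂ : Option (B ⊕ B ⊕ (A ⊕ C))) (hgx : gx = x₂.map (j2L A B C D)) :
    ∃ y₂, gy = y₂.map (j2L A B C D) ∧ σ.2.2 = τ.2.2 ∧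
      relabel (compPerm A B C) (autSum δ δ') ((σ.1, σ.2.1), x₂) ((τ.1, τ.2.1), y₂) := by
  rcases h with ⟨u, v, hx, hy, hst, hd⟩ | ⟨u, v, hx, hy, hst1, hst2, hd⟩ |
    ⟨u, v, hx, hy, hst1, hst2, hd⟩ <;> dsimp only at hx hy hd
  · refine ⟨v.map (preTL A B C D), ?_, congrArg Prod.snd hst, Or.inl ⟨u, v, ?_, ?_, ?_, hd⟩⟩
    · rw [hy]; cases v with
      | none => rfl
      | some w => simp [j2L_preTL]
    · exact recov2L_T x₂ u (by rw [← hgx]; exact hx)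
    · rw [Option.map_map]
      cases v with
      | none => rfl
      | some w =>
          show some ((compPerm A B C).symm (preTL A B C D w)) = some (Sum.inl w)
          rcases w with a | b <;> rfl
    · exact congrArg Prod.fst hst
  · refine ⟨v.map (preT'L A B C D), ?_, hst2, Or.inr ⟨u, v, ?_, ?_, hst1, hd⟩⟩
    · rw [hy]; cases v with
      | none => rfl
      | some w => simp [j2L_preT'L]
    · exact recov2L_T' x₂ u (by rw [← hgx]; exact hx)
    · rw [Option.map_map]
      cases v with
      | none => rfl
      | some w =>
          show some ((compPerm A B C).symm (preT'L A B C D w)) = some (Sum.inr w)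
          rcases w with b | c <;> rfl
  · exfalso
    clear hgx
    rcases hB with ⟨b, j, rfl⟩ | ⟨b, j, rfl⟩
    · fin_cases j <;> rcases u with _ | ⟨c | d⟩ <;> simp_all [pt, eT'']
    · fin_cases j <;> rcases v with _ | ⟨c | d⟩ <;> simp_all [pt, eT'']

lemma goodL (σ τ : Q × Q' × Q'') (gx gy : Option ((B ⊕ C) ⊕ (B ⊕ C) ⊕ (A ⊕ D)))
    (h : gdelta δ δ' δ'' (σ, gx) (τ, gy))
    (hB : ∃ b j, gy = pt (X := B ⊕ C) (Y := A ⊕ D) (Sum.inl b) j) :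
    ∃ x₂ : Option (B ⊕ B ⊕ (A ⊕ C)), gx = x₂.map (j2L A B C D) := by
  rcases h with ⟨u, v, hx, hy, _, _⟩ | ⟨u, v, hx, hy, _, _, _⟩ | ⟨u, v, hx, hy, _, _, _⟩ <;>
    dsimp only at hx hy
  · refine ⟨u.map (preTL A B C D), ?_⟩
    rw [hx]; cases u with
    | none => rfl
    | some w => simp [j2L_preTL]
  · refine ⟨u.map (preT'L A B C D), ?_⟩
    rw [hx]; cases u with
    | none => rfl
    | some w => simp [j2L_preT'L]
  · exfalso
    obtain ⟨b, j, rfl⟩ := hB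
    fin_cases j <;> rcases v with _ | ⟨c | d⟩ <;> simp_all [pt, eT'']

lemma HsegL : ∀ (bs : List (B × Fin 2)) (hd : B × Fin 2)
    (x₂ : Option (B ⊕ B ⊕ (A ⊕ C))) (gy : Option ((B ⊕ C) ⊕ (B ⊕ C) ⊕ (A ⊕ D)))
    (σ τ : Q × Q' × Q''),
    chainR (gdelta δ δ' δ'') ((Sum.inl hd.1, hd.2) :: bs.map (fun w => (Sum.inl w.1, w.2)))
      (x₂.map (j2L A B C D)) gy σ τ →
    ∃ y₂, gy = y₂.map (j2L A B C D) ∧ σ.2.2 = τ.2.2 ∧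
      chainR (relabel (compPerm A B C) (autSum δ δ')) (hd :: bs) x₂ y₂
        (σ.1, σ.2.1) (τ.1, τ.2.1) := by
  intro bs
  induction bs with
  | nil =>
      rintro ⟨b, j⟩ x₂ gy σ τ ⟨s3, h1, h2⟩
      obtain ⟨y₂', hy', hq1, hδa⟩ := E2L δ δ' δ'' σ s3 _ _ h1 (Or.inr ⟨b, j, rfl⟩) x₂ rfl
      have hy'' : y₂' = pt b j :=
        Option.map_injective (j2L_inj) (by rw [← hy', ptB_eq])
      subst hy''
      obtain ⟨y₂, hgy, hq2, hδb⟩ := E2L δ δ' δ'' s3 τ _ _ h2 (Or.inl ⟨b, swap2 j, rfl⟩)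
        (pt b (swap2 j)) (ptB_eq b (swap2 j))
      exact ⟨y₂, hgy, hq1.trans hq2, ⟨(s3.1, s3.2.1), hδa, hδb⟩⟩
  | cons w bs ih =>
      rintro ⟨b, j⟩ x₂ gy σ τ ⟨s3, h1, h2⟩
      obtain ⟨y₂', hy', hq1, hδa⟩ := E2L δ δ' δ'' σ s3 _ _ h1 (Or.inr ⟨b, j, rfl⟩) x₂ rfl
      have hy'' : y₂' = pt b j :=
        Option.map_injective (j2L_inj) (by rw [← hy', ptB_eq])
      subst hy''
      rw [show (pt (X := B ⊕ C) (Y := A ⊕ D) (Sum.inl b) (swap2 j)) =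
        Option.map (j2L A B C D) (pt b (swap2 j)) from ptB_eq b (swap2 j)] at h2
      obtain ⟨y₂, hgy, hq2, hch⟩ := ih w (pt b (swap2 j)) gy s3 τ h2
      exact ⟨y₂, hgy, hq1.trans hq2, ⟨(s3.1, s3.2.1), hδa, hch⟩⟩

end GlueL

section GlueL2

variable {Q Q' Q'' A B C D : Type*}

/-- Embedding of `A ⊕ C` into the relabeled sort of `(T ∘ T') ⊕ T''`. -/
def fL (A B C D : Type*) : A ⊕ C → C ⊕ C ⊕ (A ⊕ D)
  | .inl a => .inr (.inr (.inl a))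
  | .inr c => .inl c

variable (δ : TRel Q (A ⊕ B)) (δ' : TRel Q' (B ⊕ C)) (δ'' : TRel Q'' (C ⊕ D))

lemma transL (x : Option (C ⊕ C ⊕ (A ⊕ D))) (x₂ : Option (B ⊕ B ⊕ (A ⊕ C)))
    (h : x.map (j1L A B C D) = x₂.map (j2L A B C D)) :
    ∃ u' : Option (A ⊕ C), x = u'.map (fL A B C D) ∧
      x₂ = u'.map (fun w => Sum.inr (Sum.inr w)) := by
  cases x with
  | none =>
      cases x₂ with
      | none => exact ⟨none, rfl, rfl⟩
      | some w => simp at h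
  | some w1 =>
      cases x₂ with
      | none => simp at h
      | some w2 =>
          simp only [Option.map_some, Option.some.injEq] at h
          rcases w1 with c | ⟨c | ⟨a | d⟩⟩ <;> rcases w2 with b | ⟨b | ⟨a' | c'⟩⟩ <;>
            simp_all [j1L, j2L]
          · subst h; rfl
          · subst h; rfl

lemma transL1 (x : Option (C ⊕ C ⊕ (A ⊕ D))) (u : Option (A ⊕ B))
    (h : x.map (j1L A B C D) = u.map (eT A B C D)) :
    ∃ ua : Option A, u = ua.map Sum.inl ∧
      x = ua.map (fun a => Sum.inr (Sum.inr (Sum.inl a))) := by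
  cases x with
  | none =>
      cases u with
      | none => exact ⟨none, rfl, rfl⟩
      | some w => simp at h
  | some w1 =>
      cases u with
      | none => simp at h
      | some w =>
          simp only [Option.map_some, Option.some.injEq] at h
          rcases w1 with c | ⟨c | ⟨a | d⟩⟩ <;> rcases w with a' | b <;>
            simp_all [j1L, eT]

lemma transL2 (x : Option (C ⊕ C ⊕ (A ⊕ D))) (u : Option (B ⊕ C))
    (h : x.map (j1L A B C D) = u.map (eT' A B C D)) :
    ∃ uc : Option C, u = uc.map Sum.inr ∧ x = uc.map Sum.inl := by
  cases x with
  | none =>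
      cases u with
      | none => exact ⟨none, rfl, rfl⟩
      | some w => simp at h
  | some w1 =>
      cases u with
      | none => simp at h
      | some w =>
          simp only [Option.map_some, Option.some.injEq] at h
          rcases w1 with c | ⟨c | ⟨a | d⟩⟩ <;> rcases w with b | c' <;>
            simp_all [j1L, eT']

lemma transL3 (x : Option (C ⊕ C ⊕ (A ⊕ D))) (u : Option (C ⊕ D))
    (h : x.map (j1L A B C D) = u.map (eT'' A B C D)) :
    x = u.map (fun w => (compPerm A C D) (Sum.inr w)) := by
  cases x with
  | none =>
      cases u with
      | none => rfl
      | some w => simp at h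
  | some w1 =>
      cases u with
      | none => simp at h
      | some w =>
          simp only [Option.map_some, Option.some.injEq] at h
          rcases w1 with c | ⟨c | ⟨a | d⟩⟩ <;> rcases w with c' | d' <;>
            simp_all [j1L, eT''] <;> subst h <;> rfl

lemma SegBaseL [Fintype B] (x y : Option (C ⊕ C ⊕ (A ⊕ D)))
    (q r : Q) (q' r' : Q') (q'' r'' : Q'')
    (h : gdelta δ δ' δ'' ((q, q', q''), x.map (j1L A B C D))
      ((r, r', r''), y.map (j1L A B C D))) :
    relabel (compPerm A C D) (autSum (compAut δ δ') δ'')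
      (((q, q'), q''), x) (((r, r'), r''), y) := by
  rcases h with ⟨u, v, hx, hy, hst, hd⟩ | ⟨u, v, hx, hy, hst1, hst2, hd⟩ |
    ⟨u, v, hx, hy, hst1, hst2, hd⟩
  · -- a move of T
    have hst' : (q', q'') = (r', r'') := hst
    have hq' : q' = r' := congrArg Prod.fst hst'
    have hq'' : q'' = r'' := congrArg Prod.snd hst'
    have hd' : δ (q, u) (r, v) := hd
    obtain ⟨ua, rfl, hx'⟩ := transL1 x u hx
    obtain ⟨va, rfl, hy'⟩ := transL1 y v hy
    have heq1 : x.map (compPerm A C D).symm =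
        (ua.map (Sum.inl : A → A ⊕ C)).map Sum.inl := by
      rw [hx']; cases ua <;> rfl
    have heq2 : y.map (compPerm A C D).symm =
        (va.map (Sum.inl : A → A ⊕ C)).map Sum.inl := by
      rw [hy']; cases va <;> rfl
    refine Or.inl ⟨ua.map Sum.inl, va.map Sum.inl, heq1, heq2, hq'', ?_⟩
    refine (kappa_iff _ _ _ _ _).mpr ⟨[], ?_⟩
    show relabel (compPerm A B C) (autSum δ δ') ((q, q'), _) ((r, r'), _)
    have heq3 : ((ua.map (Sum.inl : A → A ⊕ C)).map
        (fun b => Sum.inr (Sum.inr b) : A ⊕ C → B ⊕ B ⊕ (A ⊕ C))).map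
        (compPerm A B C).symm = (ua.map Sum.inl).map Sum.inl := by
      cases ua <;> rfl
    have heq4 : ((va.map (Sum.inl : A → A ⊕ C)).map
        (fun b => Sum.inr (Sum.inr b) : A ⊕ C → B ⊕ B ⊕ (A ⊕ C))).map
        (compPerm A B C).symm = (va.map Sum.inl).map Sum.inl := by
      cases va <;> rfl
    exact Or.inl ⟨ua.map Sum.inl, va.map Sum.inl, heq3, heq4, hq', hd'⟩
  · -- a move of T'
    have hq : q = r := hst1
    have hq'' : q'' = r'' := hst2
    have hd' : δ' (q', u) (r', v) := hd
    obtain ⟨uc, rfl, hx'⟩ := transL2 x u hx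
    obtain ⟨vc, rfl, hy'⟩ := transL2 y v hy
    have heq1 : x.map (compPerm A C D).symm =
        (uc.map (Sum.inr : C → A ⊕ C)).map Sum.inl := by
      rw [hx']; cases uc <;> rfl
    have heq2 : y.map (compPerm A C D).symm =
        (vc.map (Sum.inr : C → A ⊕ C)).map Sum.inl := by
      rw [hy']; cases vc <;> rfl
    refine Or.inl ⟨uc.map Sum.inr, vc.map Sum.inr, heq1, heq2, hq'', ?_⟩
    refine (kappa_iff _ _ _ _ _).mpr ⟨[], ?_⟩
    show relabel (compPerm A B C) (autSum δ δ') ((q, q'), _) ((r, r'), _)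
    have heq3 : ((uc.map (Sum.inr : C → A ⊕ C)).map
        (fun b => Sum.inr (Sum.inr b) : A ⊕ C → B ⊕ B ⊕ (A ⊕ C))).map
        (compPerm A B C).symm = (uc.map Sum.inr).map Sum.inr := by
      cases uc <;> rfl
    have heq4 : ((vc.map (Sum.inr : C → A ⊕ C)).map
        (fun b => Sum.inr (Sum.inr b) : A ⊕ C → B ⊕ B ⊕ (A ⊕ C))).map
        (compPerm A B C).symm = (vc.map Sum.inr).map Sum.inr := by
      cases vc <;> rfl
    exact Or.inr ⟨uc.map Sum.inr, vc.map Sum.inr, heq3, heq4, hq, hd'⟩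
  · -- a move of T''
    have hq : q = r := hst1
    have hq' : q' = r' := hst2
    have hd' : δ'' (q'', u) (r'', v) := hd
    have hx' := transL3 x u hx
    have hy' := transL3 y v hy
    have heq1 : x.map (compPerm A C D).symm = u.map Sum.inr := by
      rw [hx']; cases u with
      | none => rfl
      | some w => simp
    have heq2 : y.map (compPerm A C D).symm = v.map Sum.inr := by
      rw [hy']; cases v with
      | none => rfl
      | some w => simp
    exact Or.inr ⟨u, v, heq1, heq2, by rw [hq, hq'], hd'⟩

lemma SegL_mpr [Fintype B] : ∀ (bs : List (B × Fin 2)) (x y : Option (C ⊕ C ⊕ (A ⊕ D)))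
    (q r : Q) (q' r' : Q') (q'' r'' : Q''),
    chainR (gdelta δ δ' δ'') (bs.map (fun w => (Sum.inl w.1, w.2)))
      (x.map (j1L A B C D)) (y.map (j1L A B C D)) (q, q', q'') (r, r', r'') →
    relabel (compPerm A C D) (autSum (compAut δ δ') δ'')
      (((q, q'), q''), x) (((r, r'), r''), y) := by
  rintro (_ | ⟨⟨b, j⟩, bs⟩) x y q r q' r' q'' r'' h
  · exact SegBaseL δ δ' δ'' x y q r q' r' q'' r'' h
  · obtain ⟨s3, h1, h2⟩ := h
    obtain ⟨x₂, hx₂⟩ := goodL δ δ' δ'' _ _ _ _ h1 ⟨b, j, rfl⟩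
    rw [hx₂] at h1
    obtain ⟨y₂, hy₂, hq'', hch⟩ := HsegL δ δ' δ'' bs (b, j) x₂ _ _ _ ⟨s3, h1, h2⟩
    obtain ⟨u', hxu, hx₂u⟩ := transL x x₂ hx₂
    obtain ⟨v', hyv, hy₂v⟩ := transL y y₂ hy₂
    refine Or.inl ⟨u', v', ?_, ?_, hq'', ?_⟩
    · rw [hxu]; cases u' with
      | none => rfl
      | some w => rcases w with a | c <;> rfl
    · rw [hyv]; cases v' with
      | none => rfl
      | some w => rcases w with a | c <;> rfl
    · refine (kappa_iff _ _ _ _ _).mpr ⟨(b, j) :: bs, ?_⟩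
      rw [hx₂u, hy₂v] at hch
      exact hch

lemma SegL_mp [Fintype B] (x y : Option (C ⊕ C ⊕ (A ⊕ D)))
    (q r : Q) (q' r' : Q') (q'' r'' : Q'')
    (h : relabel (compPerm A C D) (autSum (compAut δ δ') δ'')
      (((q, q'), q''), x) (((r, r'), r''), y)) :
    ∃ bs : List (B × Fin 2),
      chainR (gdelta δ δ' δ'') (bs.map (fun w => (Sum.inl w.1, w.2)))
        (x.map (j1L A B C D)) (y.map (j1L A B C D)) (q, q', q'') (r, r', r'') := by
  rcases h with ⟨u', v', hx, hy, hst, hcomp⟩ | ⟨u, v, hx, hy, hst, hd⟩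
  · obtain ⟨bs, hch⟩ := (kappa_iff _ _ _ _ _).mp hcomp
    refine ⟨bs, ?_⟩
    have hxx : x.map (j1L A B C D) =
        (u'.map (fun w => Sum.inr (Sum.inr w))).map (j2L A B C D) := by
      rw [map_trans (compPerm A C D) Sum.inl hx (j1L A B C D)
        (fun w => j2L A B C D (Sum.inr (Sum.inr w))) (by rintro (a | c) <;> rfl)]
      cases u' <;> rfl
    have hyy : y.map (j1L A B C D) =
        (v'.map (fun w => Sum.inr (Sum.inr w))).map (j2L A B C D) := by
      rw [map_trans (compPerm A C D) Sum.inl hy (j1L A B C D)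
        (fun w => j2L A B C D (Sum.inr (Sum.inr w))) (by rintro (a | c) <;> rfl)]
      cases v' <;> rfl
    rw [hxx, hyy]
    have hq'' : q'' = r'' := hst
    subst hq''
    exact FlatL δ δ' δ'' bs _ _ (q, q') (r, r') q'' hch
  · have hst' : (q, q') = (r, r') := hst
    refine ⟨[], Or.inr (Or.inr ⟨u, v, ?_, ?_, ?_, ?_, hd⟩)⟩
    · exact map_trans (compPerm A C D) Sum.inr hx _ _ (by rintro (c | d) <;> rfl)
    · exact map_trans (compPerm A C D) Sum.inr hy _ _ (by rintro (c | d) <;> rfl)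
    · show q = r; exact congrArg Prod.fst hst'
    · show q' = r'; exact congrArg Prod.snd hst' 

end GlueL2

section GlueL3

variable {Q Q' Q'' A B C D : Type*}
variable (δ : TRel Q (A ⊕ B)) (δ' : TRel Q' (B ⊕ C)) (δ'' : TRel Q'' (C ⊕ D))

lemma ChainL_mp [Fintype B] : ∀ (cs : List (C × Fin 2)) (x1 y1 : Option (C ⊕ C ⊕ (A ⊕ D)))
    (q r : Q) (q' r' : Q') (q'' r'' : Q''),
    chainR (relabel (compPerm A C D) (autSum (compAut δ δ') δ'')) cs x1 y1
      ((q, q'), q'') ((r, r'), r'') →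
    ∃ ws, chainR (gdelta δ δ' δ'') ws (x1.map (j1L A B C D)) (y1.map (j1L A B C D))
      (q, q', q'') (r, r', r'') := by
  intro cs
  induction cs with
  | nil =>
      intro x1 y1 q r q' r' q'' r'' h
      obtain ⟨bs, hbs⟩ := SegL_mp δ δ' δ'' x1 y1 q r q' r' q'' r'' h
      exact ⟨bs.map (fun w => (Sum.inl w.1, w.2)), hbs⟩
  | cons w cs ih =>
      obtain ⟨c, j⟩ := w
      rintro x1 y1 q r q' r' q'' r'' ⟨s, h1, h2⟩
      obtain ⟨⟨s1, s2⟩, s3⟩ := s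
      obtain ⟨bs, hbs⟩ := SegL_mp δ δ' δ'' x1 (pt c j) q s1 q' s2 q'' s3 h1
      obtain ⟨ws', hws'⟩ := ih (pt c (swap2 j)) y1 s1 r s2 r' s3 r'' h2
      rw [← ptC_eq_L] at hbs hws'
      exact ⟨bs.map (fun w => (Sum.inl w.1, w.2)) ++ (Sum.inr c, j) :: ws',
        chainR_append _ _ _ _ _ _ _ _ _ _ hbs hws'⟩

lemma allB_or_split : ∀ (ws : List ((B ⊕ C) × Fin 2)),
    (∃ bs : List (B × Fin 2), ws = bs.map (fun w => (Sum.inl w.1, w.2))) ∨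
    (∃ (bs : List (B × Fin 2)) (c : C) (j : Fin 2) (rest : List ((B ⊕ C) × Fin 2)),
      ws = bs.map (fun w => (Sum.inl w.1, w.2)) ++ (Sum.inr c, j) :: rest) := by
  intro ws
  induction ws with
  | nil => exact Or.inl ⟨[], rfl⟩
  | cons w ws ih =>
      obtain ⟨w0, j⟩ := w
      rcases w0 with b | c
      · rcases ih with ⟨bs, rfl⟩ | ⟨bs, c, j', rest, rfl⟩
        · exact Or.inl ⟨(b, j) :: bs, rfl⟩
        · exact Or.inr ⟨(b, j) :: bs, c, j', rest, rfl⟩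
      · exact Or.inr ⟨[], c, j, ws, rfl⟩

lemma ChainL_mpr [Fintype B] : ∀ (n : ℕ) (ws : List ((B ⊕ C) × Fin 2)),
    ws.length ≤ n → ∀ (x1 y1 : Option (C ⊕ C ⊕ (A ⊕ D)))
    (q r : Q) (q' r' : Q') (q'' r'' : Q''),
    chainR (gdelta δ δ' δ'') ws (x1.map (j1L A B C D)) (y1.map (j1L A B C D))
      (q, q', q'') (r, r', r'') →
    ∃ cs, chainR (relabel (compPerm A C D) (autSum (compAut δ δ') δ'')) cs x1 y1
      ((q, q'), q'') ((r, r'), r'') := by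
  intro n
  induction n with
  | zero =>
      intro ws hlen x1 y1 q r q' r' q'' r'' h
      rw [Nat.le_zero, List.length_eq_zero_iff] at hlen
      subst hlen
      exact ⟨[], SegL_mpr δ δ' δ'' [] x1 y1 q r q' r' q'' r'' h⟩
  | succ n ih =>
      intro ws hlen x1 y1 q r q' r' q'' r'' h
      rcases allB_or_split ws with ⟨bs, rfl⟩ | ⟨bs, c, j, rest, rfl⟩
      · exact ⟨[], SegL_mpr δ δ' δ'' bs x1 y1 q r q' r' q'' r'' h⟩
      · obtain ⟨s, h1, h2⟩ := chainR_split _ _ _ _ _ _ _ _ _ h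
        obtain ⟨s1, s2, s3⟩ := s
        rw [ptC_eq_L] at h1 h2
        have hedge := SegL_mpr δ δ' δ'' bs x1 (pt c j) q s1 q' s2 q'' s3 h1
        have hlen' : rest.length ≤ n := by
          simp only [List.length_append, List.length_map, List.length_cons] at hlen
          omega
        obtain ⟨cs', hcs'⟩ := ih rest hlen' (pt c (swap2 j)) y1 s1 r s2 r' s3 r'' h2
        exact ⟨(c, j) :: cs', ⟨((s1, s2), s3), hedge, hcs'⟩⟩

lemma LIff [Fintype B] [Fintype C] (q r : Q) (q' r' : Q') (q'' r'' : Q'')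
    (x y : Option (A ⊕ D)) :
    compAut (compAut δ δ') δ'' (((q, q'), q''), x) (((r, r'), r''), y) ↔
    ∃ ws, chainR (gdelta δ δ' δ'') ws
      (x.map (fun ad => Sum.inr (Sum.inr ad))) (y.map (fun ad => Sum.inr (Sum.inr ad)))
      (q, q', q'') (r, r', r'') := by
  have hmx : ∀ z : Option (A ⊕ D),
      (z.map (fun b : A ⊕ D => Sum.inr (Sum.inr b) : A ⊕ D → C ⊕ C ⊕ (A ⊕ D))).map
        (j1L A B C D) = z.map (fun ad => Sum.inr (Sum.inr ad)) := by
    intro z; cases z <;> rfl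
  rw [show compAut (compAut δ δ') δ'' =
    kappa (relabel (compPerm A C D) (autSum (compAut δ δ') δ'')) from rfl, kappa_iff]
  constructor
  · rintro ⟨cs, h⟩
    obtain ⟨ws, hws⟩ := ChainL_mp δ δ' δ'' cs _ _ q r q' r' q'' r'' h
    rw [hmx x, hmx y] at hws
    exact ⟨ws, hws⟩
  · rintro ⟨ws, h⟩
    refine ChainL_mpr δ δ' δ'' ws.length ws le_rfl _ _ q r q' r' q'' r'' ?_
    rw [hmx x, hmx y]
    exact h

end GlueL3

section GlueR

variable {Q Q' Q'' A B C D : Type*}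

/-- Embedding of the sort of `(T' ⊕ T'') · ρ` into the global sort. -/
def j2R (A B C D : Type*) : C ⊕ C ⊕ (B ⊕ D) → (B ⊕ C) ⊕ (B ⊕ C) ⊕ (A ⊕ D)
  | .inl c => .inl (.inr c)
  | .inr (.inl c) => .inr (.inl (.inr c))
  | .inr (.inr (.inl b)) => .inr (.inl (.inl b))
  | .inr (.inr (.inr d)) => .inr (.inr (.inr d))

/-- Embedding of the sort of `(T ⊕ (T' ∘ T'')) · ρ` into the global sort. -/
def j1R (A B C D : Type*) : B ⊕ B ⊕ (A ⊕ D) → (B ⊕ C) ⊕ (B ⊕ C) ⊕ (A ⊕ D)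
  | .inl b => .inl (.inl b)
  | .inr (.inl b) => .inr (.inl (.inl b))
  | .inr (.inr ad) => .inr (.inr ad)

lemma ptC_eq_R (c : C) (j : Fin 2) :
    (pt (X := B ⊕ C) (Y := A ⊕ D) (Sum.inr c) j) =
      Option.map (j2R A B C D) (pt (X := C) (Y := B ⊕ D) c j) := by
  fin_cases j <;> rfl

lemma ptB_eq_R (b : B) (j : Fin 2) :
    (pt (X := B ⊕ C) (Y := A ⊕ D) (Sum.inl b) j) =
      Option.map (j1R A B C D) (pt (X := B) (Y := A ⊕ D) b j) := by
  fin_cases j <;> rfl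

variable (δ : TRel Q (A ⊕ B)) (δ' : TRel Q' (B ⊕ C)) (δ'' : TRel Q'' (C ⊕ D))

lemma E1R (x y : Option (C ⊕ C ⊕ (B ⊕ D))) (p p' : Q' × Q'') (t : Q)
    (h : relabel (compPerm B C D) (autSum δ' δ'') (p, x) (p', y)) :
    gdelta δ δ' δ'' ((t, p.1, p.2), x.map (j2R A B C D))
      ((t, p'.1, p'.2), y.map (j2R A B C D)) := by
  rcases h with ⟨u, v, hx, hy, hst, hd⟩ | ⟨u, v, hx, hy, hst, hd⟩
  · exact Or.inr (Or.inl ⟨u, v,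
      map_trans (compPerm B C D) Sum.inl hx _ _ (by rintro (b | c) <;> rfl),
      map_trans (compPerm B C D) Sum.inl hy _ _ (by rintro (b | c) <;> rfl),
      rfl, hst, hd⟩)
  · exact Or.inr (Or.inr ⟨u, v,
      map_trans (compPerm B C D) Sum.inr hx _ _ (by rintro (c | d) <;> rfl),
      map_trans (compPerm B C D) Sum.inr hy _ _ (by rintro (c | d) <;> rfl),
      rfl, hst, hd⟩)

lemma FlatR : ∀ (cs : List (C × Fin 2)) (x y : Option (C ⊕ C ⊕ (B ⊕ D)))
    (p p' : Q' × Q'') (t : Q),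
    chainR (relabel (compPerm B C D) (autSum δ' δ'')) cs x y p p' →
    chainR (gdelta δ δ' δ'') (cs.map (fun w => (Sum.inr w.1, w.2)))
      (x.map (j2R A B C D)) (y.map (j2R A B C D)) (t, p.1, p.2) (t, p'.1, p'.2) := by
  intro cs
  induction cs with
  | nil => intro x y p p' t h; exact E1R δ δ' δ'' x y p p' t h
  | cons w cs ih =>
      obtain ⟨c, j⟩ := w
      rintro x y p p' t ⟨s, h1, h2⟩
      refine ⟨(t, s.1, s.2), ?_, ?_⟩
      · rw [ptC_eq_R]; exact E1R δ δ' δ'' x _ p s t h1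
      · show chainR _ _ (pt (Sum.inr c) (swap2 j)) _ _ _
        rw [ptC_eq_R]; exact ih _ y s p' t h2

lemma j2R_inj : Function.Injective (j2R A B C D) := by
  rintro (c | ⟨c | ⟨b | d⟩⟩) (c' | ⟨c' | ⟨b' | d'⟩⟩) h <;> simp_all [j2R]

lemma recov2R_T' (x₂ : Option (C ⊕ C ⊕ (B ⊕ D))) (u : Option (B ⊕ C))
    (h : x₂.map (j2R A B C D) = u.map (eT' A B C D)) :
    x₂.map (compPerm B C D).symm = u.map Sum.inl := by
  cases x₂ with
  | none => cases u with
    | none => rfl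
    | some w => simp at h
  | some w₂ => cases u with
    | none => simp at h
    | some w =>
        simp only [Option.map_some] at h ⊢
        rcases w with b | c <;> rcases w₂ with c' | ⟨c' | ⟨b' | d'⟩⟩ <;>
          simp_all [j2R, eT'] <;> rfl

lemma recov2R_T'' (x₂ : Option (C ⊕ C ⊕ (B ⊕ D))) (u : Option (C ⊕ D))
    (h : x₂.map (j2R A B C D) = u.map (eT'' A B C D)) :
    x₂.map (compPerm B C D).symm = u.map Sum.inr := by
  cases x₂ with
  | none => cases u with
    | none => rfl
    | some w => simp at h
  | some w₂ => cases u with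
    | none => simp at h
    | some w =>
        simp only [Option.map_some] at h ⊢
        rcases w with c | d <;> rcases w₂ with c' | ⟨c' | ⟨b' | d'⟩⟩ <;>
          simp_all [j2R, eT''] <;> rfl

/-- The preimage of `T'`-interfaces in the sort of `(T' ⊕ T'') · ρ`. -/
def preT'R (A B C D : Type*) : B ⊕ C → C ⊕ C ⊕ (B ⊕ D)
  | .inl b => .inr (.inr (.inl b))
  | .inr c => .inl c

/-- The preimage of `T''`-interfaces in the sort of `(T' ⊕ T'') · ρ`. -/
def preT''R (A B C D : Type*) : C ⊕ D → C ⊕ C ⊕ (B ⊕ D)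
  | .inl c => .inr (.inl c)
  | .inr d => .inr (.inr (.inr d))

lemma j2R_preT'R (w : B ⊕ C) : j2R A B C D (preT'R A B C D w) = eT' A B C D w := by
  rcases w with b | c <;> rfl

lemma j2R_preT''R (w : C ⊕ D) : j2R A B C D (preT''R A B C D w) = eT'' A B C D w := by
  rcases w with c | d <;> rfl

lemma E2R (σ τ : Q × Q' × Q'') (gx gy : Option ((B ⊕ C) ⊕ (B ⊕ C) ⊕ (A ⊕ D)))
    (h : gdelta δ δ' δ'' (σ, gx) (τ, gy))
    (hC : (∃ c j, gx = pt (X := B ⊕ C) (Y := A ⊕ D) (Sum.inr c) j) ∨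
          (∃ c j, gy = pt (X := B ⊕ C) (Y := A ⊕ D) (Sum.inr c) j))
    (x₂ : Option (C ⊕ C ⊕ (B ⊕ D))) (hgx : gx = x₂.map (j2R A B C D)) :
    ∃ y₂, gy = y₂.map (j2R A B C D) ∧ σ.1 = τ.1 ∧
      relabel (compPerm B C D) (autSum δ' δ'') ((σ.2.1, σ.2.2), x₂) ((τ.2.1, τ.2.2), y₂) := by
  rcases h with ⟨u, v, hx, hy, hst, hd⟩ | ⟨u, v, hx, hy, hst1, hst2, hd⟩ |
    ⟨u, v, hx, hy, hst1, hst2, hd⟩ <;> dsimp only at hx hy hd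
  · exfalso
    clear hgx
    rcases hC with ⟨c, j, rfl⟩ | ⟨c, j, rfl⟩
    · fin_cases j <;> rcases u with _ | ⟨a | b⟩ <;> simp_all [pt, eT]
    · fin_cases j <;> rcases v with _ | ⟨a | b⟩ <;> simp_all [pt, eT]
  · refine ⟨v.map (preT'R A B C D), ?_, hst1, Or.inl ⟨u, v, ?_, ?_, hst2, hd⟩⟩
    · rw [hy]; cases v with
      | none => rfl
      | some w => simp [j2R_preT'R]
    · exact recov2R_T' x₂ u (by rw [← hgx]; exact hx)
    · rw [Option.map_map]
      cases v with
      | none => rfl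
      | some w =>
          show some ((compPerm B C D).symm (preT'R A B C D w)) = some (Sum.inl w)
          rcases w with b | c <;> rfl
  · refine ⟨v.map (preT''R A B C D), ?_, hst1, Or.inr ⟨u, v, ?_, ?_, hst2, hd⟩⟩
    · rw [hy]; cases v with
      | none => rfl
      | some w => simp [j2R_preT''R]
    · exact recov2R_T'' x₂ u (by rw [← hgx]; exact hx)
    · rw [Option.map_map]
      cases v with
      | none => rfl
      | some w =>
          show some ((compPerm B C D).symm (preT''R A B C D w)) = some (Sum.inr w)
          rcases w with c | d <;> rfl

lemma goodR (σ τ : Q × Q' × Q'') (gx gy : Option ((B ⊕ C) ⊕ (B ⊕ C) ⊕ (A ⊕ D)))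
    (h : gdelta δ δ' δ'' (σ, gx) (τ, gy))
    (hC : ∃ c j, gy = pt (X := B ⊕ C) (Y := A ⊕ D) (Sum.inr c) j) :
    ∃ x₂ : Option (C ⊕ C ⊕ (B ⊕ D)), gx = x₂.map (j2R A B C D) := by
  rcases h with ⟨u, v, hx, hy, _, _⟩ | ⟨u, v, hx, hy, _, _, _⟩ | ⟨u, v, hx, hy, _, _, _⟩ <;>
    dsimp only at hx hy
  · exfalso
    obtain ⟨c, j, rfl⟩ := hC
    fin_cases j <;> rcases v with _ | ⟨a | b⟩ <;> simp_all [pt, eT]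
  · refine ⟨u.map (preT'R A B C D), ?_⟩
    rw [hx]; cases u with
    | none => rfl
    | some w => simp [j2R_preT'R]
  · refine ⟨u.map (preT''R A B C D), ?_⟩
    rw [hx]; cases u with
    | none => rfl
    | some w => simp [j2R_preT''R]

lemma HsegR : ∀ (cs : List (C × Fin 2)) (hd : C × Fin 2)
    (x₂ : Option (C ⊕ C ⊕ (B ⊕ D))) (gy : Option ((B ⊕ C) ⊕ (B ⊕ C) ⊕ (A ⊕ D)))
    (σ τ : Q × Q' × Q''),
    chainR (gdelta δ δ' δ'') ((Sum.inr hd.1, hd.2) :: cs.map (fun w => (Sum.inr w.1, w.2)))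
      (x₂.map (j2R A B C D)) gy σ τ →
    ∃ y₂, gy = y₂.map (j2R A B C D) ∧ σ.1 = τ.1 ∧
      chainR (relabel (compPerm B C D) (autSum δ' δ'')) (hd :: cs) x₂ y₂
        (σ.2.1, σ.2.2) (τ.2.1, τ.2.2) := by
  intro cs
  induction cs with
  | nil =>
      rintro ⟨c, j⟩ x₂ gy σ τ ⟨s3, h1, h2⟩
      obtain ⟨y₂', hy', hq1, hδa⟩ := E2R δ δ' δ'' σ s3 _ _ h1 (Or.inr ⟨c, j, rfl⟩) x₂ rfl
      have hy'' : y₂' = pt c j :=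
        Option.map_injective (j2R_inj) (by rw [← hy', ptC_eq_R])
      subst hy''
      obtain ⟨y₂, hgy, hq2, hδb⟩ := E2R δ δ' δ'' s3 τ _ _ h2 (Or.inl ⟨c, swap2 j, rfl⟩)
        (pt c (swap2 j)) (ptC_eq_R c (swap2 j))
      exact ⟨y₂, hgy, hq1.trans hq2, ⟨(s3.2.1, s3.2.2), hδa, hδb⟩⟩
  | cons w cs ih =>
      rintro ⟨c, j⟩ x₂ gy σ τ ⟨s3, h1, h2⟩
      obtain ⟨y₂', hy', hq1, hδa⟩ := E2R δ δ' δ'' σ s3 _ _ h1 (Or.inr ⟨c, j, rfl⟩) x₂ rfl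
      have hy'' : y₂' = pt c j :=
        Option.map_injective (j2R_inj) (by rw [← hy', ptC_eq_R])
      subst hy''
      rw [show (pt (X := B ⊕ C) (Y := A ⊕ D) (Sum.inr c) (swap2 j)) =
        Option.map (j2R A B C D) (pt c (swap2 j)) from ptC_eq_R c (swap2 j)] at h2
      obtain ⟨y₂, hgy, hq2, hch⟩ := ih w (pt c (swap2 j)) gy s3 τ h2
      exact ⟨y₂, hgy, hq1.trans hq2, ⟨(s3.2.1, s3.2.2), hδa, hch⟩⟩

end GlueR

section GlueR2

variable {Q Q' Q'' A B C D : Type*}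

/-- Embedding of `B ⊕ D` into the relabeled sort of `T ⊕ (T' ∘ T'')`. -/
def fR (A B C D : Type*) : B ⊕ D → B ⊕ B ⊕ (A ⊕ D)
  | .inl b => .inr (.inl b)
  | .inr d => .inr (.inr (.inr d))

variable (δ : TRel Q (A ⊕ B)) (δ' : TRel Q' (B ⊕ C)) (δ'' : TRel Q'' (C ⊕ D))

lemma transR (x : Option (B ⊕ B ⊕ (A ⊕ D))) (x₂ : Option (C ⊕ C ⊕ (B ⊕ D)))
    (h : x.map (j1R A B C D) = x₂.map (j2R A B C D)) :
    ∃ u' : Option (B ⊕ D), x = u'.map (fR A B C D) ∧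
      x₂ = u'.map (fun w => Sum.inr (Sum.inr w)) := by
  cases x with
  | none =>
      cases x₂ with
      | none => exact ⟨none, rfl, rfl⟩
      | some w => simp at h
  | some w1 =>
      cases x₂ with
      | none => simp at h
      | some w2 =>
          simp only [Option.map_some, Option.some.injEq] at h
          rcases w1 with b | ⟨b | ⟨a | d⟩⟩ <;> rcases w2 with c | ⟨c | ⟨b' | d'⟩⟩ <;>
            simp_all [j1R, j2R]
          · subst h; rfl
          · subst h; rfl

lemma transR1 (x : Option (B ⊕ B ⊕ (A ⊕ D))) (u : Option (A ⊕ B))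
    (h : x.map (j1R A B C D) = u.map (eT A B C D)) :
    x = u.map (fun w => (compPerm A B D) (Sum.inl w)) := by
  cases x with
  | none =>
      cases u with
      | none => rfl
      | some w => simp at h
  | some w1 =>
      cases u with
      | none => simp at h
      | some w =>
          simp only [Option.map_some, Option.some.injEq] at h
          rcases w1 with b | ⟨b | ⟨a | d⟩⟩ <;> rcases w with a' | b' <;>
            simp_all [j1R, eT] <;> subst h <;> rfl

lemma transR2 (x : Option (B ⊕ B ⊕ (A ⊕ D))) (u : Option (B ⊕ C))
    (h : x.map (j1R A B C D) = u.map (eT' A B C D)) :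
    ∃ ub : Option B, u = ub.map Sum.inl ∧
      x = ub.map (fun b => Sum.inr (Sum.inl b)) := by
  cases x with
  | none =>
      cases u with
      | none => exact ⟨none, rfl, rfl⟩
      | some w => simp at h
  | some w1 =>
      cases u with
      | none => simp at h
      | some w =>
          simp only [Option.map_some, Option.some.injEq] at h
          rcases w1 with b | ⟨b | ⟨a | d⟩⟩ <;> rcases w with b' | c <;>
            simp_all [j1R, eT']

lemma transR3 (x : Option (B ⊕ B ⊕ (A ⊕ D))) (u : Option (C ⊕ D))
    (h : x.map (j1R A B C D) = u.map (eT'' A B C D)) :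
    ∃ ud : Option D, u = ud.map Sum.inr ∧
      x = ud.map (fun d => Sum.inr (Sum.inr (Sum.inr d))) := by
  cases x with
  | none =>
      cases u with
      | none => exact ⟨none, rfl, rfl⟩
      | some w => simp at h
  | some w1 =>
      cases u with
      | none => simp at h
      | some w =>
          simp only [Option.map_some, Option.some.injEq] at h
          rcases w1 with b | ⟨b | ⟨a | d⟩⟩ <;> rcases w with c | d' <;>
            simp_all [j1R, eT'']

lemma SegBaseR [Fintype C] (x y : Option (B ⊕ B ⊕ (A ⊕ D)))
    (q r : Q) (q' r' : Q') (q'' r'' : Q'')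
    (h : gdelta δ δ' δ'' ((q, q', q''), x.map (j1R A B C D))
      ((r, r', r''), y.map (j1R A B C D))) :
    relabel (compPerm A B D) (autSum δ (compAut δ' δ''))
      ((q, (q', q'')), x) ((r, (r', r'')), y) := by
  rcases h with ⟨u, v, hx, hy, hst, hd⟩ | ⟨u, v, hx, hy, hst1, hst2, hd⟩ |
    ⟨u, v, hx, hy, hst1, hst2, hd⟩
  · -- a move of T
    have hst' : (q', q'') = (r', r'') := hst
    have hd' : δ (q, u) (r, v) := hd
    have hx' := transR1 x u hx
    have hy' := transR1 y v hy
    have heq1 : x.map (compPerm A B D).symm = u.map Sum.inl := by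
      rw [hx']; cases u with
      | none => rfl
      | some w => simp
    have heq2 : y.map (compPerm A B D).symm = v.map Sum.inl := by
      rw [hy']; cases v with
      | none => rfl
      | some w => simp
    exact Or.inl ⟨u, v, heq1, heq2, hst', hd'⟩
  · -- a move of T'
    have hq : q = r := hst1
    have hq'' : q'' = r'' := hst2
    have hd' : δ' (q', u) (r', v) := hd
    obtain ⟨ub, rfl, hx'⟩ := transR2 x u hx
    obtain ⟨vb, rfl, hy'⟩ := transR2 y v hy
    have heq1 : x.map (compPerm A B D).symm =
        (ub.map (Sum.inl : B → B ⊕ D)).map Sum.inr := by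
      rw [hx']; cases ub <;> rfl
    have heq2 : y.map (compPerm A B D).symm =
        (vb.map (Sum.inl : B → B ⊕ D)).map Sum.inr := by
      rw [hy']; cases vb <;> rfl
    refine Or.inr ⟨ub.map Sum.inl, vb.map Sum.inl, heq1, heq2, hq, ?_⟩
    refine (kappa_iff _ _ _ _ _).mpr ⟨[], ?_⟩
    show relabel (compPerm B C D) (autSum δ' δ'') ((q', q''), _) ((r', r''), _)
    have heq3 : ((ub.map (Sum.inl : B → B ⊕ D)).map
        (fun b => Sum.inr (Sum.inr b) : B ⊕ D → C ⊕ C ⊕ (B ⊕ D))).map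
        (compPerm B C D).symm = (ub.map Sum.inl).map Sum.inl := by
      cases ub <;> rfl
    have heq4 : ((vb.map (Sum.inl : B → B ⊕ D)).map
        (fun b => Sum.inr (Sum.inr b) : B ⊕ D → C ⊕ C ⊕ (B ⊕ D))).map
        (compPerm B C D).symm = (vb.map Sum.inl).map Sum.inl := by
      cases vb <;> rfl
    exact Or.inl ⟨ub.map Sum.inl, vb.map Sum.inl, heq3, heq4, hq'', hd'⟩
  · -- a move of T''
    have hq : q = r := hst1
    have hq' : q' = r' := hst2
    have hd' : δ'' (q'', u) (r'', v) := hd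
    obtain ⟨ud, rfl, hx'⟩ := transR3 x u hx
    obtain ⟨vd, rfl, hy'⟩ := transR3 y v hy
    have heq1 : x.map (compPerm A B D).symm =
        (ud.map (Sum.inr : D → B ⊕ D)).map Sum.inr := by
      rw [hx']; cases ud <;> rfl
    have heq2 : y.map (compPerm A B D).symm =
        (vd.map (Sum.inr : D → B ⊕ D)).map Sum.inr := by
      rw [hy']; cases vd <;> rfl
    refine Or.inr ⟨ud.map Sum.inr, vd.map Sum.inr, heq1, heq2, hq, ?_⟩
    refine (kappa_iff _ _ _ _ _).mpr ⟨[], ?_⟩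
    show relabel (compPerm B C D) (autSum δ' δ'') ((q', q''), _) ((r', r''), _)
    have heq3 : ((ud.map (Sum.inr : D → B ⊕ D)).map
        (fun b => Sum.inr (Sum.inr b) : B ⊕ D → C ⊕ C ⊕ (B ⊕ D))).map
        (compPerm B C D).symm = (ud.map Sum.inr).map Sum.inr := by
      cases ud <;> rfl
    have heq4 : ((vd.map (Sum.inr : D → B ⊕ D)).map
        (fun b => Sum.inr (Sum.inr b) : B ⊕ D → C ⊕ C ⊕ (B ⊕ D))).map
        (compPerm B C D).symm = (vd.map Sum.inr).map Sum.inr := by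
      cases vd <;> rfl
    exact Or.inr ⟨ud.map Sum.inr, vd.map Sum.inr, heq3, heq4, hq', hd'⟩

lemma SegR_mpr [Fintype C] : ∀ (cs : List (C × Fin 2)) (x y : Option (B ⊕ B ⊕ (A ⊕ D)))
    (q r : Q) (q' r' : Q') (q'' r'' : Q''),
    chainR (gdelta δ δ' δ'') (cs.map (fun w => (Sum.inr w.1, w.2)))
      (x.map (j1R A B C D)) (y.map (j1R A B C D)) (q, q', q'') (r, r', r'') →
    relabel (compPerm A B D) (autSum δ (compAut δ' δ''))
      ((q, (q', q'')), x) ((r, (r', r'')), y) := by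
  rintro (_ | ⟨⟨c, j⟩, cs⟩) x y q r q' r' q'' r'' h
  · exact SegBaseR δ δ' δ'' x y q r q' r' q'' r'' h
  · obtain ⟨s3, h1, h2⟩ := h
    obtain ⟨x₂, hx₂⟩ := goodR δ δ' δ'' _ _ _ _ h1 ⟨c, j, rfl⟩
    rw [hx₂] at h1
    obtain ⟨y₂, hy₂, hq, hch⟩ := HsegR δ δ' δ'' cs (c, j) x₂ _ _ _ ⟨s3, h1, h2⟩
    obtain ⟨u', hxu, hx₂u⟩ := transR x x₂ hx₂
    obtain ⟨v', hyv, hy₂v⟩ := transR y y₂ hy₂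
    refine Or.inr ⟨u', v', ?_, ?_, hq, ?_⟩
    · rw [hxu]; cases u' with
      | none => rfl
      | some w => rcases w with b | d <;> rfl
    · rw [hyv]; cases v' with
      | none => rfl
      | some w => rcases w with b | d <;> rfl
    · refine (kappa_iff _ _ _ _ _).mpr ⟨(c, j) :: cs, ?_⟩
      rw [hx₂u, hy₂v] at hch
      exact hch

lemma SegR_mp [Fintype C] (x y : Option (B ⊕ B ⊕ (A ⊕ D)))
    (q r : Q) (q' r' : Q') (q'' r'' : Q'')
    (h : relabel (compPerm A B D) (autSum δ (compAut δ' δ''))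
      ((q, (q', q'')), x) ((r, (r', r'')), y)) :
    ∃ cs : List (C × Fin 2),
      chainR (gdelta δ δ' δ'') (cs.map (fun w => (Sum.inr w.1, w.2)))
        (x.map (j1R A B C D)) (y.map (j1R A B C D)) (q, q', q'') (r, r', r'') := by
  rcases h with ⟨u, v, hx, hy, hst, hd⟩ | ⟨u', v', hx, hy, hst, hcomp⟩
  · have hst' : (q', q'') = (r', r'') := hst
    have hd' : δ (q, u) (r, v) := hd
    refine ⟨[], Or.inl ⟨u, v, ?_, ?_, hst', hd'⟩⟩
    · exact map_trans (compPerm A B D) Sum.inl hx _ _ (by rintro (a | b) <;> rfl)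
    · exact map_trans (compPerm A B D) Sum.inl hy _ _ (by rintro (a | b) <;> rfl)
  · have hq : q = r := hst
    subst hq
    obtain ⟨cs, hch⟩ := (kappa_iff _ _ _ _ _).mp hcomp
    refine ⟨cs, ?_⟩
    have hxx : x.map (j1R A B C D) =
        (u'.map (fun w => Sum.inr (Sum.inr w))).map (j2R A B C D) := by
      rw [map_trans (compPerm A B D) Sum.inr hx (j1R A B C D)
        (fun w => j2R A B C D (Sum.inr (Sum.inr w))) (by rintro (b | d) <;> rfl)]
      cases u' <;> rfl
    have hyy : y.map (j1R A B C D) =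
        (v'.map (fun w => Sum.inr (Sum.inr w))).map (j2R A B C D) := by
      rw [map_trans (compPerm A B D) Sum.inr hy (j1R A B C D)
        (fun w => j2R A B C D (Sum.inr (Sum.inr w))) (by rintro (b | d) <;> rfl)]
      cases v' <;> rfl
    rw [hxx, hyy]
    exact FlatR δ δ' δ'' cs _ _ (q', q'') (r', r'') q hch

end GlueR2

section GlueR3

variable {Q Q' Q'' A B C D : Type*}
variable (δ : TRel Q (A ⊕ B)) (δ' : TRel Q' (B ⊕ C)) (δ'' : TRel Q'' (C ⊕ D))

lemma ChainR_mp [Fintype C] : ∀ (bs : List (B × Fin 2)) (x1 y1 : Option (B ⊕ B ⊕ (A ⊕ D)))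
    (q r : Q) (q' r' : Q') (q'' r'' : Q''),
    chainR (relabel (compPerm A B D) (autSum δ (compAut δ' δ''))) bs x1 y1
      (q, (q', q'')) (r, (r', r'')) →
    ∃ ws, chainR (gdelta δ δ' δ'') ws (x1.map (j1R A B C D)) (y1.map (j1R A B C D))
      (q, q', q'') (r, r', r'') := by
  intro bs
  induction bs with
  | nil =>
      intro x1 y1 q r q' r' q'' r'' h
      obtain ⟨cs, hcs⟩ := SegR_mp δ δ' δ'' x1 y1 q r q' r' q'' r'' h
      exact ⟨cs.map (fun w => (Sum.inr w.1, w.2)), hcs⟩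
  | cons w bs ih =>
      obtain ⟨b, j⟩ := w
      rintro x1 y1 q r q' r' q'' r'' ⟨s, h1, h2⟩
      obtain ⟨s1, s2, s3⟩ := s
      obtain ⟨cs, hcs⟩ := SegR_mp δ δ' δ'' x1 (pt b j) q s1 q' s2 q'' s3 h1
      obtain ⟨ws', hws'⟩ := ih (pt b (swap2 j)) y1 s1 r s2 r' s3 r'' h2
      rw [← ptB_eq_R] at hcs hws'
      exact ⟨cs.map (fun w => (Sum.inr w.1, w.2)) ++ (Sum.inl b, j) :: ws',
        chainR_append _ _ _ _ _ _ _ _ _ _ hcs hws'⟩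

lemma allC_or_split : ∀ (ws : List ((B ⊕ C) × Fin 2)),
    (∃ cs : List (C × Fin 2), ws = cs.map (fun w => (Sum.inr w.1, w.2))) ∨
    (∃ (cs : List (C × Fin 2)) (b : B) (j : Fin 2) (rest : List ((B ⊕ C) × Fin 2)),
      ws = cs.map (fun w => (Sum.inr w.1, w.2)) ++ (Sum.inl b, j) :: rest) := by
  intro ws
  induction ws with
  | nil => exact Or.inl ⟨[], rfl⟩
  | cons w ws ih =>
      obtain ⟨w0, j⟩ := w
      rcases w0 with b | c
      · exact Or.inr ⟨[], b, j, ws, rfl⟩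
      · rcases ih with ⟨cs, rfl⟩ | ⟨cs, b, j', rest, rfl⟩
        · exact Or.inl ⟨(c, j) :: cs, rfl⟩
        · exact Or.inr ⟨(c, j) :: cs, b, j', rest, rfl⟩

lemma ChainR_mpr [Fintype C] : ∀ (n : ℕ) (ws : List ((B ⊕ C) × Fin 2)),
    ws.length ≤ n → ∀ (x1 y1 : Option (B ⊕ B ⊕ (A ⊕ D)))
    (q r : Q) (q' r' : Q') (q'' r'' : Q''),
    chainR (gdelta δ δ' δ'') ws (x1.map (j1R A B C D)) (y1.map (j1R A B C D))
      (q, q', q'') (r, r', r'') →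
    ∃ bs, chainR (relabel (compPerm A B D) (autSum δ (compAut δ' δ''))) bs x1 y1
      (q, (q', q'')) (r, (r', r'')) := by
  intro n
  induction n with
  | zero =>
      intro ws hlen x1 y1 q r q' r' q'' r'' h
      rw [Nat.le_zero, List.length_eq_zero_iff] at hlen
      subst hlen
      exact ⟨[], SegR_mpr δ δ' δ'' [] x1 y1 q r q' r' q'' r'' h⟩
  | succ n ih =>
      intro ws hlen x1 y1 q r q' r' q'' r'' h
      rcases allC_or_split ws with ⟨cs, rfl⟩ | ⟨cs, b, j, rest, rfl⟩
      · exact ⟨[], SegR_mpr δ δ' δ'' cs x1 y1 q r q' r' q'' r'' h⟩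
      · obtain ⟨s, h1, h2⟩ := chainR_split _ _ _ _ _ _ _ _ _ h
        obtain ⟨s1, s2, s3⟩ := s
        rw [ptB_eq_R] at h1 h2
        have hedge := SegR_mpr δ δ' δ'' cs x1 (pt b j) q s1 q' s2 q'' s3 h1
        have hlen' : rest.length ≤ n := by
          simp only [List.length_append, List.length_map, List.length_cons] at hlen
          omega
        obtain ⟨bs', hbs'⟩ := ih rest hlen' (pt b (swap2 j)) y1 s1 r s2 r' s3 r'' h2
        exact ⟨(b, j) :: bs', ⟨(s1, (s2, s3)), hedge, hbs'⟩⟩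

lemma RIff [Fintype B] [Fintype C] (q r : Q) (q' r' : Q') (q'' r'' : Q'')
    (x y : Option (A ⊕ D)) :
    compAut δ (compAut δ' δ'') ((q, (q', q'')), x) ((r, (r', r'')), y) ↔
    ∃ ws, chainR (gdelta δ δ' δ'') ws
      (x.map (fun ad => Sum.inr (Sum.inr ad))) (y.map (fun ad => Sum.inr (Sum.inr ad)))
      (q, q', q'') (r, r', r'') := by
  have hmx : ∀ z : Option (A ⊕ D),
      (z.map (fun b : A ⊕ D => Sum.inr (Sum.inr b) : A ⊕ D → B ⊕ B ⊕ (A ⊕ D))).map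
        (j1R A B C D) = z.map (fun ad => Sum.inr (Sum.inr ad)) := by
    intro z; cases z <;> rfl
  rw [show compAut δ (compAut δ' δ'') =
    kappa (relabel (compPerm A B D) (autSum δ (compAut δ' δ''))) from rfl, kappa_iff]
  constructor
  · rintro ⟨bs, h⟩
    obtain ⟨ws, hws⟩ := ChainR_mp δ δ' δ'' bs _ _ q r q' r' q'' r'' h
    rw [hmx x, hmx y] at hws
    exact ⟨ws, hws⟩
  · rintro ⟨ws, h⟩
    refine ChainR_mpr δ δ' δ'' ws.length ws le_rfl _ _ q r q' r' q'' r'' ?_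
    rw [hmx x, hmx y]
    exact h

end GlueR3

/-- Associativity of the derived composition of Turing automata, up to the canonical state
bijection `(Q × Q') × Q'' ≅ Q × (Q' × Q'')`: for Turing automata of sorts `A ⊕ B`,
`B ⊕ C`, `C ⊕ D` (`B`, `C` finite), the transition relations of `(T ∘ T') ∘ T''` and
`T ∘ (T' ∘ T'')` coincide. -/
theorem comp_assoc {Q Q' Q'' A B C D : Type*} [Nonempty Q] [Nonempty Q'] [Nonempty Q'']
    [Fintype B] [Fintype C]
    (δ : TRel Q (A ⊕ B)) (δ' : TRel Q' (B ⊕ C)) (δ'' : TRel Q'' (C ⊕ D)) :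
    ∀ (q r : Q) (q' r' : Q') (q'' r'' : Q'') (x y : Option (A ⊕ D)),
      compAut (compAut δ δ') δ'' (((q, q'), q''), x) (((r, r'), r''), y) ↔
      compAut δ (compAut δ' δ'') ((q, (q', q'')), x) ((r, (r', r'')), y) := by
  intro q r q' r' q'' r'' x y
  exact (LIff δ δ' δ'' q r q' r' q'' r'' x y).trans
    (RIff δ δ' δ'' q r q' r' q'' r'' x y).symm
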